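/- Let R be a ring with finitely generated additive group, and define Δ(R) = Is(R²) ∩ Ann(R). Then the quotient group Ann(R)/Δ(R) is a free abelian group, and consequently Δ(R) has a direct complement in Ann(R). -/

import Mathlib

/-- The ideal (additive subgroup) generated by all products in `R`. -/
def sqIdeal (R : Type*) [NonUnitalNonAssocRing R] : AddSubgroup R :=
  AddSubgroup.closure {z : R | ∃ x y : R, z = x * y}

/-- The two-sided annihilator of `R` as an additive subgroup. -/
def ann (R : Type*) [NonUnitalNonAssocRing R] : AddSubgroup R where
  carrier := {x : R | ∀ y : R, x * y = 0 ∧ y * x = 0}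
  zero_mem' := fun y => ⟨zero_mul y, mul_zero y⟩
  add_mem' := by
    intro a b ha hb y
    exact ⟨by rw [add_mul, (ha y).1, (hb y).1, add_zero],
      by rw [mul_add, (ha y).2, (hb y).2, add_zero]⟩
  neg_mem' := by
    intro a ha y
    exact ⟨by rw [neg_mul, (ha y).1, neg_zero], by rw [mul_neg, (ha y).2, neg_zero]⟩

/-- The isolator `Is(I) = {x : ∃ n ≠ 0, n • x ∈ I}` of an additive subgroup. -/
def isolator {R : Type*} [AddCommGroup R] (I : AddSubgroup R) : AddSubgroup R where
  carrier := {x : R | ∃ n : ℤ, n ≠ 0 ∧ n • x ∈ I}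
  zero_mem' := ⟨1, one_ne_zero, by simpa using I.zero_mem⟩
  add_mem' := by
    rintro a b ⟨n, hn, ha⟩ ⟨m, hm, hb⟩
    refine ⟨n * m, mul_ne_zero hn hm, ?_⟩
    rw [smul_add]
    exact AddSubgroup.add_mem _
      (by rw [mul_comm, mul_smul]; exact AddSubgroup.zsmul_mem _ ha m)
      (by rw [mul_smul]; exact AddSubgroup.zsmul_mem _ hb n)
  neg_mem' := by
    rintro a ⟨n, hn, ha⟩
    exact ⟨n, hn, by rw [smul_neg]; exact AddSubgroup.neg_mem _ ha⟩

/-- `Ann(R)/Δ(R)` is free abelian, where `Δ(R) = Is(R²) ⊓ Ann(R)`; consequently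
`Δ(R)` has a direct complement in `Ann(R)`. -/
theorem ann_mod_delta_free (R : Type*) [NonUnitalNonAssocRing R]
    (hR : AddGroup.FG R) :
    Module.Free ℤ ((ann R) ⧸ ((isolator (sqIdeal R) ⊓ ann R).addSubgroupOf (ann R))) ∧
    ∃ K : AddSubgroup R, K ≤ ann R ∧
      (isolator (sqIdeal R) ⊓ ann R) ⊓ K = ⊥ ∧
      (isolator (sqIdeal R) ⊓ ann R) ⊔ K = ann R := by
  set Δ : AddSubgroup R := isolator (sqIdeal R) ⊓ ann R with hΔdef
  set A : AddSubgroup R := ann R with hAdef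
  set Δ' : AddSubgroup A := Δ.addSubgroupOf A with hΔ'def
  have h1 : Module.Finite ℤ R := Module.Finite.iff_addGroup_fg.mpr hR
  have h2 : IsNoetherian ℤ R := isNoetherian_of_isNoetherianRing_of_finite ℤ R
  have hA : Module.Finite ℤ A :=
    (inferInstance : Module.Finite ℤ (AddSubgroup.toIntSubmodule A))
  -- the quotient map as a linear map
  let f : A →ₗ[ℤ] (A ⧸ Δ') := (QuotientAddGroup.mk' Δ').toIntLinearMap
  have hfsurj : Function.Surjective f := QuotientAddGroup.mk'_surjective Δ'
  have hQfin : Module.Finite ℤ (A ⧸ Δ') := Module.Finite.of_surjective f hfsurj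
  -- torsion-freeness of the quotient
  have key : ∀ (n : ℤ) (a : A), n ≠ 0 → n • a ∈ Δ' → a ∈ Δ' := by
    intro n a hn hmem
    have hmem' : ((n • a : A) : R) ∈ Δ := hmem
    have hiso : (n • (a : R)) ∈ isolator (sqIdeal R) := hmem'.1
    obtain ⟨m, hm, hms⟩ := hiso
    refine ⟨⟨m * n, mul_ne_zero hm hn, by rwa [mul_smul]⟩, a.2⟩
  have hQtf : NoZeroSMulDivisors ℤ (A ⧸ Δ') := by
    refine ⟨fun {n x} h => ?_⟩
    rcases eq_or_ne n 0 with h0 | h0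
    · exact Or.inl h0
    right
    obtain ⟨a, rfl⟩ := hfsurj x
    have : f (n • a) = 0 := by rw [map_smul, h]
    have hna : n • a ∈ Δ' := (QuotientAddGroup.eq_zero_iff _).mp this
    have ha : a ∈ Δ' := key n a h0 hna
    exact (QuotientAddGroup.eq_zero_iff _).mpr ha
  have hfree : Module.Free ℤ (A ⧸ Δ') := Module.free_of_finite_type_torsion_free'
  refine ⟨hfree, ?_⟩
  -- split the quotient map
  have hproj : Module.Projective ℤ (A ⧸ Δ') := inferInstance
  obtain ⟨s, hs⟩ := Module.projective_lifting_property f LinearMap.id hfsurj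
  have hsec : ∀ q, f (s q) = q := fun q => congrArg (fun g => g q) (congrArg DFunLike.coe hs)
  -- the complement
  refine ⟨(LinearMap.range s).toAddSubgroup.map A.subtype, ?_, ?_, ?_⟩
  · rintro x ⟨a, _, rfl⟩
    exact a.2
  · rw [eq_bot_iff]
    rintro x ⟨hxΔ, a, ⟨q, rfl⟩, rfl⟩
    have haΔ' : s q ∈ Δ' := hxΔ
    have : f (s q) = 0 := (QuotientAddGroup.eq_zero_iff _).mpr haΔ'
    rw [hsec] at this
    subst this
    simp [map_zero]
  · apply le_antisymm
    · exact sup_le inf_le_right (by rintro x ⟨a, _, rfl⟩; exact a.2)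
    · intro x hx
      set a : A := ⟨x, hx⟩ with hadef
      have hker : a - s (f a) ∈ Δ' := by
        have : f (a - s (f a)) = 0 := by rw [map_sub, hsec, sub_self]
        exact (QuotientAddGroup.eq_zero_iff _).mp this
      have h1 : ((a - s (f a) : A) : R) ∈ Δ := hker
      have h2 : ((s (f a) : A) : R) ∈ (LinearMap.range s).toAddSubgroup.map A.subtype :=
        ⟨s (f a), ⟨f a, rfl⟩, rfl⟩
      have : x = ((a - s (f a) : A) : R) + ((s (f a) : A) : R) := by
        simp [hadef]
      rw [this]
      exact AddSubgroup.add_mem _ (le_sup_left (α := AddSubgroup R) h1)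
        (le_sup_right (α := AddSubgroup R) h2)
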